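/- In a non-singlet family S=(a_1,...,a_k,b_l,...,b_1), the positions that are NOT exit positions are exactly: the highest blue b_l, and, in the case k=1, the unique red a_1. Consequently a family with exactly two elements has no exit positions, while a family with at least three elements remains a family after removal of any exit element. -/

import Mathlib

/-- A (non-singlet) sequence family: a list `(a₁,…,a_k,b_l,…,b₁)` of integers with
`k, l ≥ 1` and `b₁ < … < b_l < a₁ < … < a_k`; the `aᵢ` (the increasing prefix) are the
reds (ascent values) and the `bⱼ` (the decreasing suffix) are the blues (descent values). -/
def IsFamilySeq (l : List ℤ) : Prop :=
  ∃ a d : List ℤ, l = a ++ d ∧ a ≠ [] ∧ d ≠ [] ∧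
    a.Chain' (· < ·) ∧ d.Chain' (· > ·) ∧ ∀ u ∈ d, ∀ v ∈ a, u < v

/-- Insert `m` immediately before (the unique occurrence of) `x` in `l`. -/
def insertBefore (l : List ℤ) (x m : ℤ) : List ℤ :=
  l.takeWhile (· != x) ++ m :: l.dropWhile (· != x)

/-- `x` is in an exit position of the family `l`: inserting any `m` larger than all
elements of `l` immediately before `x` does not yield a family. -/
def ExitPos (l : List ℤ) (x : ℤ) : Prop :=
  x ∈ l ∧ ∀ m : ℤ, (∀ y ∈ l, y < m) → ¬ IsFamilySeq (insertBefore l x m)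

/-- `l'` is the regular insertion of `x` into the family `l = a ++ d` (reds `a`, blues `d`,
highest blue `b_l = max d`): if `x > b_l` then `x` is inserted, colored red, at its order
position among the reds, and if `x < b_l` then `x` is inserted, colored blue, at its order
position among the blues. -/
def RegInsert (l : List ℤ) (x : ℤ) (l' : List ℤ) : Prop :=
  ∃ a d : List ℤ, l = a ++ d ∧ a ≠ [] ∧ d ≠ [] ∧
    a.Chain' (· < ·) ∧ d.Chain' (· > ·) ∧ (∀ u ∈ d, ∀ v ∈ a, u < v) ∧
    (((∀ u ∈ d, u < x) ∧ l' = List.orderedInsert (· ≤ ·) x a ++ d) ∨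
     ((∃ u ∈ d, x < u) ∧ l' = a ++ List.orderedInsert (fun p q => q ≤ p) x d))

private lemma exists_bound (l : List ℤ) : ∃ m : ℤ, ∀ y ∈ l, y < m := by
  induction l with
  | nil => exact ⟨0, by simp⟩
  | cons y l ih =>
    obtain ⟨m, hm⟩ := ih
    refine ⟨max m (y + 1), fun z hz => ?_⟩
    rcases List.mem_cons.mp hz with rfl | hz
    · exact lt_of_lt_of_le (by omega) (le_max_right _ _)
    · exact lt_of_lt_of_le (hm z hz) (le_max_left _ _)

private lemma mem_split_first {x : ℤ} {l : List ℤ} (h : x ∈ l) :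
    ∃ s t, l = s ++ x :: t ∧ x ∉ s := by
  induction l with
  | nil => simp at h
  | cons y l ih =>
    by_cases hxy : y = x
    · exact ⟨[], l, by simp [hxy], by simp⟩
    · obtain ⟨s, t, hst, hxs⟩ := ih (by
        rcases List.mem_cons.mp h with h | h
        · exact absurd h.symm hxy
        · exact h)
      refine ⟨y :: s, t, by rw [hst]; rfl, ?_⟩
      simp only [List.mem_cons]
      rintro (rfl | hmem)
      · exact hxy rfl
      · exact hxs hmem

private lemma insertBefore_eq : ∀ (s : List ℤ) {t : List ℤ} {x : ℤ}, x ∉ s → ∀ m,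
    insertBefore (s ++ x :: t) x m = s ++ m :: x :: t
  | [], t, x, _, m => by simp [insertBefore]
  | y :: s, t, x, h, m => by
    have hyx : ((y : ℤ) != x) = true := by
      simp only [bne_iff_ne, ne_eq]
      rintro rfl; exact h (List.mem_cons_self)
    have ih := insertBefore_eq s (t := t) (x := x)
      (fun hx => h (List.mem_cons_of_mem _ hx)) m
    simp only [insertBefore] at ih
    simp only [insertBefore, List.cons_append, List.takeWhile_cons, List.dropWhile_cons,
      hyx, if_true]
    exact congrArg (y :: ·) ih

private lemma descent_lemma {p q : List ℤ} {v w : ℤ}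
    (h : IsFamilySeq (p ++ v :: w :: q)) (hvw : w < v) :
    List.Pairwise (· > ·) (w :: q) ∧ ∀ c ∈ (p ++ [v]).head?, ∀ u ∈ w :: q, u < c := by
  obtain ⟨a', d', heq, ha', hd', hca', hcd', hlt'⟩ := h
  have hpa' : List.Pairwise (· < ·) a' := List.isChain_iff_pairwise.mp hca'
  have hpd' : List.Pairwise (· > ·) d' := List.isChain_iff_pairwise.mp hcd'
  have heq' : (p ++ [v]) ++ w :: q = a' ++ d' := by simpa using heq
  rcases List.append_eq_append_iff.mp heq' with ⟨t, hta, htd⟩ | ⟨t, hta, htd⟩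
  · -- a' = (p++[v]) ++ t, w :: q = t ++ d'
    rcases t with _ | ⟨z, t⟩
    · simp only [List.append_nil] at hta
      simp only [List.nil_append] at htd
      constructor
      · rw [← htd] at hpd'; exact hpd'
      · intro c hc u hu
        have hca : c ∈ a' := by
          rw [hta]
          exact List.mem_of_mem_head? hc
        have hud : u ∈ d' := by rw [← htd]; exact hu
        exact hlt' u hud c hca
    · -- contradiction: v < z = w
      exfalso
      simp only [List.cons_append, List.cons.injEq] at htd
      obtain ⟨hwz, -⟩ := htd
      have hsub : List.Sublist [v, z] a' := by
        rw [hta]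
        have h1 : List.Sublist [v, z] (v :: z :: t) := by
          simp
        have h2 : (p ++ [v]) ++ z :: t = p ++ v :: z :: t := by simp
        rw [h2]
        exact h1.trans (List.sublist_append_right p _)
      have : v < z := ((List.pairwise_cons.mp (hpa'.sublist hsub)).1 z (by simp))
      omega
  · -- p ++ [v] = a' ++ t, d' = t ++ w :: q
    constructor
    · exact hpd'.sublist (htd ▸ List.sublist_append_right t _)
    · intro c hc u hu
      rcases a' with _ | ⟨c', a''⟩
      · exact absurd rfl ha'
      · have hc' : c' = c := by
          rw [List.cons_append] at hta
          rw [hta] at hc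
          simpa using hc
        have hud : u ∈ d' := by rw [htd]; exact List.mem_append_right t hu
        have := hlt' u hud c' (by simp)
        omega

/-- In a non-singlet family `a ++ d` (reds `a`, blues `d`), the non-exit positions are
exactly the highest blue (the head of `d`) and, when there is a unique red, that red.
Consequently a two-element family has no exit positions, while a family with at least
three elements remains a family after removal of any exit element. -/
theorem exit_positions_characterization (a d : List ℤ)
    (ha : a ≠ []) (hd : d ≠ []) (hca : a.Chain' (· < ·)) (hcd : d.Chain' (· > ·))
    (hlt : ∀ u ∈ d, ∀ v ∈ a, u < v) :
    (∀ x ∈ a ++ d, (¬ ExitPos (a ++ d) x ↔ (d.head? = some x ∨ a = [x]))) ∧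
    ((a ++ d).length = 2 → ∀ x : ℤ, ¬ ExitPos (a ++ d) x) ∧
    (3 ≤ (a ++ d).length → ∀ x : ℤ, ExitPos (a ++ d) x →
      IsFamilySeq ((a ++ d).erase x)) := by
  have hpa : a.Pairwise (· < ·) := List.isChain_iff_pairwise.mp hca
  have hpd : d.Pairwise (· > ·) := List.isChain_iff_pairwise.mp hcd
  have had : ∀ x ∈ d, x ∉ a := fun x hxd hxa => lt_irrefl x (hlt x hxd x hxa)
  have key : ∀ x ∈ a ++ d, (¬ ExitPos (a ++ d) x ↔ (d.head? = some x ∨ a = [x])) := by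
    intro x hx
    constructor
    · intro hne
      by_contra hcon
      push_neg at hcon
      apply hne
      refine ⟨hx, fun m hm hf => ?_⟩
      rcases List.mem_append.mp hx with hxa | hxd
      · -- x ∈ a, a ≠ [x]
        obtain ⟨s, t, hst, hxs⟩ := mem_split_first hxa
        have hf' : IsFamilySeq (s ++ m :: x :: (t ++ d)) := by
          have hrw : a ++ d = s ++ x :: (t ++ d) := by rw [hst]; simp
          rw [hrw, insertBefore_eq s hxs m] at hf
          exact hf
        have hxm : x < m := hm x hx
        have hdl := descent_lemma hf' hxm
        cases t with
        | cons z t' =>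
          have hsub : List.Sublist (x :: z :: t') a := by
            rw [hst]; exact List.sublist_append_right s _
          have hxz : x < z := (List.pairwise_cons.mp (hpa.sublist hsub)).1 z (by simp)
          have hzx : x > z := (List.pairwise_cons.mp hdl.1).1 z (by simp)
          omega
        | nil =>
          cases s with
          | nil => exact hcon.2 (by simpa using hst)
          | cons c s' =>
            have hcx : c < x := by
              have hp := hpa
              rw [hst] at hp
              exact (List.pairwise_append.mp hp).2.2 c (by simp) x (by simp)
            have hxc : x < c := hdl.2 c (by simp) x (by simp)
            omega
      · -- x ∈ d, x not the head of d
        obtain ⟨e, d'', hde⟩ : ∃ e d'', d = e :: d'' := by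
          cases d with
          | nil => exact absurd rfl hd
          | cons e d'' => exact ⟨e, d'', rfl⟩
        have hxe : x ≠ e := by
          intro hxe
          exact hcon.1 (by rw [hde, hxe]; rfl)
        have hxd'' : x ∈ d'' := by
          rw [hde] at hxd
          rcases List.mem_cons.mp hxd with h | h
          · exact absurd h hxe
          · exact h
        obtain ⟨s, t, hst, hxs⟩ := mem_split_first hxd''
        have hxS : x ∉ a ++ e :: s := by
          intro hmem
          rcases List.mem_append.mp hmem with h | h
          · exact had x hxd h
          · rcases List.mem_cons.mp h with h | h
            · exact hxe h
            · exact hxs h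
        have hf' : IsFamilySeq ((a ++ e :: s) ++ m :: x :: t) := by
          have hrw : a ++ d = (a ++ e :: s) ++ x :: t := by rw [hde, hst]; simp
          rw [hrw, insertBefore_eq (a ++ e :: s) hxS m] at hf
          exact hf
        obtain ⟨a₀, ak, hak⟩ : ∃ a₀ ak, a = a₀ ++ [ak] := by
          rcases List.eq_nil_or_concat a with h | ⟨a₀, ak, h⟩
          · exact absurd h ha
          · exact ⟨a₀, ak, by rw [h, List.concat_eq_append]⟩
        have hf'' : IsFamilySeq (a₀ ++ ak :: e :: (s ++ m :: x :: t)) := by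
          have heq2 : (a ++ e :: s) ++ m :: x :: t = a₀ ++ ak :: e :: (s ++ m :: x :: t) := by
            rw [hak]; simp
          rwa [heq2] at hf'
        have hek : e < ak := hlt e (by rw [hde]; simp) ak (by rw [hak]; simp)
        have hdl := descent_lemma hf'' hek
        have hem : e > m := (List.pairwise_cons.mp hdl.1).1 m (by simp)
        have hme : e < m := hm e (by rw [hde]; simp)
        omega
    · intro hor hEx
      obtain ⟨hx', hall⟩ := hEx
      obtain ⟨m, hm⟩ := exists_bound (a ++ d)
      apply hall m hm
      rcases hor with hor | hor
      · -- d = x :: d₂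
        obtain ⟨d₂, hde⟩ : ∃ d₂, d = x :: d₂ := by
          cases d with
          | nil => simp at hor
          | cons e d₂ =>
            simp only [List.head?_cons, Option.some.injEq] at hor
            exact ⟨d₂, by rw [hor]⟩
        have hxna : x ∉ a := had x (by rw [hde]; simp)
        have hrw : a ++ d = a ++ x :: d₂ := by rw [hde]
        rw [hrw, insertBefore_eq a hxna m]
        refine ⟨a ++ [m], x :: d₂, by simp, by simp, by simp, ?_, hde ▸ hcd, ?_⟩
        · refine List.isChain_iff_pairwise.mpr (List.pairwise_append.mpr ⟨hpa, by simp, ?_⟩)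
          intro u hu b hb
          simp only [List.mem_singleton] at hb
          subst hb
          exact hm u (List.mem_append_left d hu)
        · intro u hu v hv
          have hud : u ∈ d := by rw [hde]; exact hu
          rcases List.mem_append.mp hv with h | h
          · exact hlt u hud v h
          · simp only [List.mem_singleton] at h
            subst h
            exact hm u (List.mem_append_right a hud)
      · -- a = [x]
        have hrw : a ++ d = [] ++ x :: d := by rw [hor]; rfl
        rw [hrw, insertBefore_eq [] (by simp) m]
        refine ⟨[m], x :: d, rfl, by simp, by simp, List.isChain_singleton m, ?_, ?_⟩
        · refine List.isChain_iff_pairwise.mpr (List.pairwise_cons.mpr ⟨?_, hpd⟩)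
          intro u hu
          exact hlt u hu x (by rw [hor]; simp)
        · intro u hu v hv
          simp only [List.mem_singleton] at hv
          subst hv
          rcases List.mem_cons.mp hu with rfl | hu
          · exact hm u (List.mem_append_left d (by rw [hor]; simp))
          · exact hm u (List.mem_append_right a hu)
  refine ⟨key, ?_, ?_⟩
  · intro hlen x hEx
    have hx := hEx.1
    have ha1 : 0 < a.length := List.length_pos_iff.mpr ha
    have hd1 : 0 < d.length := List.length_pos_iff.mpr hd
    rw [List.length_append] at hlen
    have haL : a.length = 1 := by omega
    have hdL : d.length = 1 := by omega
    obtain ⟨p, rfl⟩ := List.length_eq_one_iff.mp haL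
    obtain ⟨q, rfl⟩ := List.length_eq_one_iff.mp hdL
    have : x = p ∨ x = q := by simpa using hx
    refine (key x hx).mpr ?_ hEx
    rcases this with rfl | rfl
    · right; rfl
    · left; rfl
  · intro _ x hEx
    have hx := hEx.1
    have hno : ¬ (d.head? = some x ∨ a = [x]) := fun hor => (key x hx).mpr hor hEx
    push_neg at hno
    rcases List.mem_append.mp hx with hxa | hxd
    · rw [List.erase_append_left d hxa]
      refine ⟨a.erase x, d, rfl, ?_, hd, ?_, hcd, ?_⟩
      · have h1 : a.length ≠ 1 := by
          intro h1
          obtain ⟨y, rfl⟩ := List.length_eq_one_iff.mp h1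
          simp only [List.mem_singleton] at hxa
          subst hxa
          exact hno.2 rfl
        have h0 : 0 < a.length := List.length_pos_iff.mpr ha
        have hle := List.length_erase_of_mem hxa
        intro hnil
        rw [hnil] at hle
        simp at hle
        omega
      · exact List.isChain_iff_pairwise.mpr (hpa.sublist (List.erase_sublist (a := x) (l := a)))
      · intro u hu v hv
        exact hlt u hu v (List.mem_of_mem_erase hv)
    · rw [List.erase_append_right d (had x hxd)]
      refine ⟨a, d.erase x, rfl, ha, ?_, hca, ?_, ?_⟩
      · have h1 : d.length ≠ 1 := by
          intro h1
          obtain ⟨y, rfl⟩ := List.length_eq_one_iff.mp h1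
          simp only [List.mem_singleton] at hxd
          subst hxd
          exact hno.1 rfl
        have h0 : 0 < d.length := List.length_pos_iff.mpr hd
        have hle := List.length_erase_of_mem hxd
        intro hnil
        rw [hnil] at hle
        simp at hle
        omega
      · exact List.isChain_iff_pairwise.mpr (hpd.sublist (List.erase_sublist (a := x) (l := d)))
      · intro u hu v hv
        exact hlt u (List.mem_of_mem_erase hu) v hv
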